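/- arXiv:2505.10108 — 5 statements merged into one kernel-verified Lean document; each statement's English description precedes it below -/
import Mathlib

section
/- Let E be a measurable space, π a σ-finite measure on E, R : E → E a measurable involution (R ∘ R = id) whose pushforward satisfies map R π = π, and κ a Markov kernel from E to E. If κ satisfies R-twisted detailed balance with respect to π, then the two-step composed kernel κ ∘ κ, defined by (κ ∘ κ)(x, B) = ∫_E κ(z, B) κ(x, dz), also satisfies R-twisted detailed balance with respect to π. -/
open MeasureTheory ProbabilityTheory

/-- A Markov kernel `κ` satisfies `R`-twisted detailed balance with respect to `π` if the
pushforward of `π ⊗ κ` under `(x, y) ↦ (R y, R x)` equals `π ⊗ κ`. -/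
def TwistedDetailedBalance {E : Type*} [MeasurableSpace E] (π : Measure E) (R : E → E)
    (κ : Kernel E E) : Prop :=
  (π.compProd κ).map (fun xy => (R xy.2, R xy.1)) = π.compProd κ

/-- If `κ` satisfies `R`-twisted detailed balance with respect to `π`, `R` is a measurable
involution preserving `π`, then the two-step composed kernel `κ ∘ₖ κ` also satisfies
`R`-twisted detailed balance with respect to `π`. -/
theorem twistedDetailedBalance_comp {E : Type*} [MeasurableSpace E]
    (π : Measure E) [SigmaFinite π]
    (R : E → E) (hR : Measurable R) (hRR : R ∘ R = id) (hRπ : π.map R = π)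
    (κ : Kernel E E) [IsMarkovKernel κ]
    (h : TwistedDetailedBalance π R κ) :
    TwistedDetailedBalance π R (κ.comp κ) := by
  have hR2 : ∀ x, R (R x) = x := fun x => congrFun hRR x
  have hT : Measurable fun p : E × E => (R p.2, R p.1) :=
    (hR.comp measurable_snd).prodMk (hR.comp measurable_fst)
  -- detailed balance in lintegral form
  have key : ∀ f : E × E → ENNReal, Measurable f →
      ∫⁻ p, f (R p.2, R p.1) ∂(π.compProd κ) = ∫⁻ p, f p ∂(π.compProd κ) := by
    intro f hf
    conv_rhs => rw [← h]
    rw [lintegral_map hf hT]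
  -- π-invariance in lintegral form
  have keyπ : ∀ g : E → ENNReal, Measurable g → ∫⁻ x, g (R x) ∂π = ∫⁻ x, g x ∂π := by
    intro g hg
    conv_rhs => rw [← hRπ, lintegral_map hg hR]
  -- the main triple-integral identity
  have main : ∀ f : E × E → ENNReal, Measurable f →
      ∫⁻ x, ∫⁻ y, ∫⁻ z, f (R z, R x) ∂κ y ∂κ x ∂π
        = ∫⁻ x, ∫⁻ y, ∫⁻ z, f (x, z) ∂κ y ∂κ x ∂π := by
    intro f hf
    have hfRR : Measurable fun q : (E × E) × E => f (R q.2, R q.1.1) :=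
      hf.comp ((hR.comp measurable_snd).prodMk (hR.comp (measurable_fst.comp measurable_fst)))
    set g₁ : E × E → ENNReal := fun p => ∫⁻ z, f (R z, R p.1) ∂κ p.2 with hg₁def
    have hg₂ : Measurable fun q : E × E => ∫⁻ y, f (q.1, y) ∂κ q.2 :=
      Measurable.lintegral_kernel_prod_right'
        (κ := (κ.comap Prod.snd measurable_snd : Kernel (E × E) E))
        (hf.comp ((measurable_fst.comp measurable_fst).prodMk measurable_snd))
    have hg₁ : Measurable g₁ :=
      Measurable.lintegral_kernel_prod_right' (κ := κ.comap Prod.snd measurable_snd) hfRR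
    calc
      ∫⁻ x, ∫⁻ y, ∫⁻ z, f (R z, R x) ∂κ y ∂κ x ∂π
          = ∫⁻ p, g₁ p ∂(π.compProd κ) := by
            rw [Measure.lintegral_compProd hg₁]
      _ = ∫⁻ p, g₁ (R p.2, R p.1) ∂(π.compProd κ) := (key g₁ hg₁).symm
      _ = ∫⁻ x, ∫⁻ y, g₁ (R y, R x) ∂κ x ∂π :=
            Measure.lintegral_compProd (hg₁.comp hT)
      _ = ∫⁻ x, ∫⁻ y, ∫⁻ z, f (R z, y) ∂κ (R x) ∂κ x ∂π := by
            simp only [hg₁def, hR2]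
      _ = ∫⁻ x, ∫⁻ z, ∫⁻ y, f (R z, y) ∂κ x ∂κ (R x) ∂π := by
            refine lintegral_congr fun x => ?_
            exact lintegral_lintegral_swap
              ((hf.comp ((hR.comp measurable_snd).prodMk measurable_fst)).aemeasurable)
      _ = ∫⁻ x, ∫⁻ z, ∫⁻ y, f (R z, y) ∂κ (R x) ∂κ x ∂π := by
            have hG : Measurable fun x => ∫⁻ z, ∫⁻ y, f (R z, y) ∂κ x ∂κ (R x) := by
              have hH : Measurable fun q : E × E => ∫⁻ y, f (R q.2, y) ∂κ q.1 :=
                Measurable.lintegral_kernel_prod_right'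
                  (κ := (κ.comap Prod.fst measurable_fst : Kernel (E × E) E))
                  (hf.comp ((hR.comp (measurable_snd.comp measurable_fst)).prodMk
                    measurable_snd))
              exact Measurable.lintegral_kernel_prod_right'
                (κ := κ.comap R hR) hH
            have := keyπ _ hG
            rw [← this]
            refine lintegral_congr fun x => ?_
            simp only [hR2]
      _ = ∫⁻ p, (fun q : E × E => ∫⁻ y, f (q.1, y) ∂κ q.2) (R p.2, R p.1)
            ∂(π.compProd κ) :=
            (Measure.lintegral_compProd (hg₂.comp hT)).symm
      _ = ∫⁻ p, (fun q : E × E => ∫⁻ y, f (q.1, y) ∂κ q.2) p ∂(π.compProd κ) :=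
            key _ hg₂
      _ = ∫⁻ x, ∫⁻ y, ∫⁻ z, f (x, z) ∂κ y ∂κ x ∂π :=
            Measure.lintegral_compProd hg₂
  -- conclude
  unfold TwistedDetailedBalance
  ext s hs
  rw [Measure.map_apply hT hs, Measure.compProd_apply (hT hs), Measure.compProd_apply hs]
  have expand : ∀ (t : Set (E × E)), MeasurableSet t → ∀ x,
      (κ.comp κ) x (Prod.mk x ⁻¹' t) = ∫⁻ y, κ y (Prod.mk x ⁻¹' t) ∂κ x := by
    intro t ht x
    rw [Kernel.comp_apply' _ _ _ (measurable_prodMk_left ht)]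
  simp_rw [expand _ (hT hs), expand _ hs]
  have := main (s.indicator 1) (measurable_one.indicator hs)
  have eq1 : ∀ x y, κ y (Prod.mk x ⁻¹' ((fun p : E × E => (R p.2, R p.1)) ⁻¹' s))
      = ∫⁻ z, s.indicator 1 (R z, R x) ∂κ y := by
    intro x y
    rw [← lintegral_indicator_one (measurable_prodMk_left (hT hs))]
    exact lintegral_congr fun z => rfl
  have eq2 : ∀ x y, κ y (Prod.mk x ⁻¹' s) = ∫⁻ z, s.indicator 1 (x, z) ∂κ y := by
    intro x y
    rw [← lintegral_indicator_one (measurable_prodMk_left hs)]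
    exact lintegral_congr fun z => rfl
  simp_rw [eq1, eq2]
  exact this
end

section
/- Let Φ and Ψ be measurable spaces, π_Φ a σ-finite measure on Φ, π_Ψ a probability measure on Ψ, and σ : Ψ → Ψ a measurable involution with map σ π_Ψ = π_Ψ. Let R : Φ × Ψ → Φ × Ψ be R(φ, ψ) = (φ, σ(ψ)). Let κ be a Markov kernel from Φ × Ψ to Φ × Ψ that satisfies R-twisted detailed balance with respect to the product measure π_Φ × π_Ψ. Define the marginal Markov kernel κ̄ from Φ to Φ by κ̄(φ, A) = ∫_Ψ κ((φ, ψ), A × Ψ) π_Ψ(dψ). Then κ̄ satisfies ordinary detailed balance with respect to π_Φ: the measure π_Φ ⊗ κ̄ on Φ × Φ is invariant under the swap map (φ, φ′) ↦ (φ′, φ). -/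
open MeasureTheory ProbabilityTheory

/-- If a Markov kernel `κ` on `Φ × Ψ` satisfies `R`-twisted detailed balance with respect to
the product measure `π_Φ × π_Ψ`, where `R (φ, ψ) = (φ, σ ψ)` with `σ` a measurable involution
preserving the probability measure `π_Ψ`, then the marginal kernel
`κ̄(φ, A) = ∫_Ψ κ((φ, ψ), A × Ψ) π_Ψ(dψ)` satisfies ordinary detailed balance with respect
to `π_Φ`: the measure `π_Φ ⊗ κ̄` is invariant under the swap `(φ, φ′) ↦ (φ′, φ)`. -/
theorem marginal_detailedBalance {Φ Ψ : Type*} [MeasurableSpace Φ] [MeasurableSpace Ψ]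
    (πΦ : Measure Φ) [SigmaFinite πΦ]
    (πΨ : Measure Ψ) [IsProbabilityMeasure πΨ]
    (σ : Ψ → Ψ) (hσ : Measurable σ) (hσσ : σ ∘ σ = id) (hσπ : πΨ.map σ = πΨ)
    (κ : Kernel (Φ × Ψ) (Φ × Ψ)) [IsMarkovKernel κ]
    (h : TwistedDetailedBalance (πΦ.prod πΨ) (fun x => (x.1, σ x.2)) κ)
    (κbar : Kernel Φ Φ) [IsMarkovKernel κbar]
    (hκbar : ∀ φ (A : Set Φ), MeasurableSet A →
      κbar φ A = ∫⁻ ψ, κ (φ, ψ) (A ×ˢ (Set.univ : Set Ψ)) ∂πΨ) :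
    (πΦ.compProd κbar).map Prod.swap = πΦ.compProd κbar := by
  -- Key computation: the value of `πΦ ⊗ κbar` on a rectangle equals the value of
  -- `(πΦ × πΨ) ⊗ κ` on the corresponding "fattened" rectangle.
  have key : ∀ (A B : Set Φ), MeasurableSet A → MeasurableSet B →
      (πΦ.compProd κbar) (A ×ˢ B)
        = ((πΦ.prod πΨ).compProd κ) ((A ×ˢ (Set.univ : Set Ψ)) ×ˢ (B ×ˢ (Set.univ : Set Ψ))) := by
    intro A B hA hB
    rw [Measure.compProd_apply_prod hA hB,
      Measure.compProd_apply_prod (hA.prod MeasurableSet.univ) (hB.prod MeasurableSet.univ)]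
    rw [← Measure.restrict_prod_eq_prod_univ A]
    rw [lintegral_prod _ ((κ.measurable_coe (hB.prod MeasurableSet.univ)).aemeasurable)]
    exact setLIntegral_congr_fun hA fun φ _ => hκbar φ B hB
  -- Symmetry of those values, from twisted detailed balance.
  have hRmeas : Measurable fun x : Φ × Ψ => (x.1, σ x.2) :=
    measurable_fst.prodMk (hσ.comp measurable_snd)
  have sym : ∀ (A B : Set Φ), MeasurableSet A → MeasurableSet B →
      (πΦ.compProd κbar) (A ×ˢ B) = (πΦ.compProd κbar) (B ×ˢ A) := by
    intro A B hA hB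
    have hpre : (fun xy : (Φ × Ψ) × (Φ × Ψ) =>
          ((fun x : Φ × Ψ => (x.1, σ x.2)) xy.2, (fun x : Φ × Ψ => (x.1, σ x.2)) xy.1)) ⁻¹'
          ((A ×ˢ (Set.univ : Set Ψ)) ×ˢ (B ×ˢ (Set.univ : Set Ψ)))
        = (B ×ˢ (Set.univ : Set Ψ)) ×ˢ (A ×ˢ (Set.univ : Set Ψ)) := by
      ext x; simp [and_comm]
    rw [key A B hA hB, key B A hB hA]
    conv_lhs => rw [← h]
    rw [Measure.map_apply
      (by exact (hRmeas.comp measurable_snd).prodMk (hRmeas.comp measurable_fst))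
      ((hA.prod MeasurableSet.univ).prod (hB.prod MeasurableSet.univ)), hpre]
  -- Conclude by uniqueness of measures agreeing on a generating π-system.
  refine Measure.ext_of_generateFrom_of_iUnion
    (Set.image2 (· ×ˢ ·) {s : Set Φ | MeasurableSet s} {t : Set Φ | MeasurableSet t})
    (fun i => spanningSets πΦ i ×ˢ (Set.univ : Set Φ))
    generateFrom_prod.symm isPiSystem_prod ?_ ?_ ?_ ?_
  · rw [← Set.univ_prod_univ, ← Set.iUnion_prod_const, iUnion_spanningSets]
  · exact fun i => Set.mem_image2_of_mem (measurableSet_spanningSets πΦ i) MeasurableSet.univ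
  · intro i
    have hsp := measurableSet_spanningSets πΦ i
    rw [Measure.map_apply measurable_swap (hsp.prod MeasurableSet.univ)]
    have : Prod.swap ⁻¹' (spanningSets πΦ i ×ˢ (Set.univ : Set Φ))
        = (Set.univ : Set Φ) ×ˢ spanningSets πΦ i := by ext ⟨a, b⟩; simp
    rw [this, ← sym _ _ hsp MeasurableSet.univ,
      Measure.compProd_apply_prod hsp MeasurableSet.univ]
    simp only [measure_univ, lintegral_one, Measure.restrict_apply_univ]
    exact (measure_spanningSets_lt_top πΦ i).ne
  · rintro _ ⟨s, hs, t, ht, rfl⟩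
    rw [Measure.map_apply measurable_swap (hs.prod ht)]
    have : Prod.swap ⁻¹' (s ×ˢ t) = t ×ˢ s := by ext ⟨a, b⟩; simp
    rw [this]
    exact sym t s ht hs
end

section
/- Let E be a measurable space, π a σ-finite measure on E, R : E → E a measurable map, (T, μ) a probability space, and κ a Markov kernel from T × E to E (a jointly measurable family of kernels (κ_t)_{t∈T}, κ_t(x, ·) = κ((t, x), ·)). Suppose that for every t ∈ T the kernel κ_t satisfies R-twisted detailed balance with respect to π. Then the mixture kernel κ̄ defined by κ̄(x, B) = ∫_T κ((t, x), B) μ(dt) also satisfies R-twisted detailed balance with respect to π. -/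
open MeasureTheory ProbabilityTheory

/-- If `(κ_t)_{t ∈ T}` is a jointly measurable family of Markov kernels (encoded as a Markov
kernel from `T × E` to `E`) such that each `κ_t` satisfies `R`-twisted detailed balance with
respect to `π`, and `μ` is a probability measure on `T`, then the mixture kernel
`κ̄(x, B) = ∫_T κ((t, x), B) μ(dt)` also satisfies `R`-twisted detailed balance with
respect to `π`. -/
theorem twistedDetailedBalance_mixture {T E : Type*} [MeasurableSpace T] [MeasurableSpace E]
    (π : Measure E) [SigmaFinite π] (R : E → E) (hR : Measurable R)
    (μ : Measure T) [IsProbabilityMeasure μ]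
    (κ : Kernel (T × E) E) [IsMarkovKernel κ]
    (h : ∀ t : T, TwistedDetailedBalance π R (κ.comap (Prod.mk t) measurable_prodMk_left))
    (κbar : Kernel E E) [IsMarkovKernel κbar]
    (hκbar : ∀ x (B : Set E), MeasurableSet B → κbar x B = ∫⁻ t, κ (t, x) B ∂μ) :
    TwistedDetailedBalance π R κbar := by
  have key : ∀ s : Set (E × E), MeasurableSet s →
      (π.compProd κbar) s = ∫⁻ t, (π.compProd (κ.comap (Prod.mk t) measurable_prodMk_left)) s ∂μ := by
    intro s hs
    have hs' : MeasurableSet {p : (T × E) × E | (p.1.2, p.2) ∈ s} :=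
      (measurable_fst.snd.prodMk measurable_snd) hs
    have hmeas : Measurable fun p : T × E => κ p (Prod.mk p.2 ⁻¹' s) := by
      have := Kernel.measurable_kernel_prodMk_left (κ := κ) hs'
      convert this using 2 with p
      rfl
    rw [Measure.compProd_apply hs]
    have h1 : ∀ x, κbar x (Prod.mk x ⁻¹' s) = ∫⁻ t, κ (t, x) (Prod.mk x ⁻¹' s) ∂μ := fun x =>
      hκbar x _ (measurable_prodMk_left hs)
    simp_rw [h1]
    rw [lintegral_lintegral_swap]
    · congr 1; ext t
      rw [Measure.compProd_apply hs]
      congr 1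
    · exact (hmeas.comp measurable_swap).aemeasurable
  have key2 : ∀ s : Set (E × E), MeasurableSet s →
      ((π.compProd κbar).map (fun xy => (R xy.2, R xy.1))) s = (π.compProd κbar) s := by
    intro s hs
    have hf : Measurable fun xy : E × E => (R xy.2, R xy.1) :=
      (hR.comp measurable_snd).prodMk (hR.comp measurable_fst)
    rw [Measure.map_apply hf hs, key _ (hf hs), key _ hs]
    congr 1; ext t
    have ht := h t
    rw [TwistedDetailedBalance] at ht
    conv_rhs => rw [← ht]
    rw [Measure.map_apply hf hs]
  exact Measure.ext fun s hs => key2 s hs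
end

section
/- Let E be a measurable space equipped with a σ-finite measure λ, let H : E → ℝ be measurable, let β > 0, and let π be the measure with density x ↦ exp(−β H(x)) with respect to λ. Let F : E → E be a measurable bijection with measurable inverse such that F is measure-preserving for λ and H ∘ F = H, and let R : E → E be a measurable involution (R ∘ R = id) that is measure-preserving for λ and satisfies H ∘ R = H and R ∘ F ∘ R = F⁻¹. Then the deterministic Markov kernel κ(x, ·) = δ_{F(x)} satisfies R-twisted detailed balance with respect to π; equivalently, the pushforward of π under the map x ↦ (x, F(x)) equals the pushforward of π under the map x ↦ (R(F(x)), R(x)). -/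
open MeasureTheory ProbabilityTheory

/-- Pushforward of a Gibbs measure under a map preserving the reference measure and the
Hamiltonian. -/
lemma gibbs_map_eq {E : Type*} [MeasurableSpace E] (lam : Measure E)
    (H : E → ℝ) (hH : Measurable H) (β : ℝ)
    (T : E → E) (hT : Measurable T) (hTpres : MeasurePreserving T lam lam)
    (hHT : H ∘ T = H) :
    (lam.withDensity fun x => ENNReal.ofReal (Real.exp (-β * H x))).map T
      = lam.withDensity fun x => ENNReal.ofReal (Real.exp (-β * H x)) := by
  set f : E → ENNReal := fun x => ENNReal.ofReal (Real.exp (-β * H x)) with hf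
  have hfm : Measurable f := (hH.const_mul (-β)).exp.ennreal_ofReal
  ext s hs
  rw [Measure.map_apply hT hs, withDensity_apply _ (hT hs), withDensity_apply _ hs]
  have key : ∀ x, f (T x) = f x := by
    intro x
    simp only [hf]
    congr 1
    have := congrFun hHT x
    simp only [Function.comp_apply] at this
    rw [this]
  calc ∫⁻ x in T ⁻¹' s, f x ∂lam = ∫⁻ x in T ⁻¹' s, f (T x) ∂lam := by
        simp_rw [key]
    _ = ∫⁻ y in s, f y ∂lam := (hTpres.restrict_preimage hs).lintegral_comp hfm

/-- The comp-prod of a measure with a deterministic kernel is the pushforward under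
`x ↦ (x, F x)`. -/
lemma compProd_deterministic_eq_map {E : Type*} [MeasurableSpace E] (π : Measure E)
    [SFinite π] (F : E → E) (hF : Measurable F) :
    π.compProd (Kernel.deterministic F hF) = π.map (fun x => (x, F x)) := by
  have hm : Measurable (fun x => (x, F x)) := measurable_id.prodMk hF
  ext s hs
  rw [Measure.compProd_apply hs, Measure.map_apply hm hs]
  have : ∀ x, Kernel.deterministic F hF x (Prod.mk x ⁻¹' s)
      = Set.indicator ((fun x => (x, F x)) ⁻¹' s) (fun _ => 1) x := by
    intro x
    rw [Kernel.deterministic_apply' hF x (measurable_prodMk_left hs)]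
    by_cases hx : (x, F x) ∈ s <;> simp [Set.indicator, hx]
  simp_rw [this]
  rw [show (fun _ : E => (1:ENNReal)) = fun _ => 1 from rfl]
  exact lintegral_indicator_one (hm hs)

/-- Let `π` have density `exp (-β H)` with respect to a σ-finite measure `λ`. If `F` is a
measurable bijection (with measurable inverse `G`) preserving `λ` and `H`, and `R` is a
measurable involution preserving `λ` and `H` with `R ∘ F ∘ R = F⁻¹`, then the deterministic
kernel `x ↦ δ_{F x}` satisfies `R`-twisted detailed balance with respect to `π`;
equivalently, the pushforward of `π` under `x ↦ (x, F x)` equals the pushforward of `π`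
under `x ↦ (R (F x), R x)`. -/
theorem deterministic_twistedDetailedBalance {E : Type*} [MeasurableSpace E]
    (lam : Measure E) [SigmaFinite lam]
    (H : E → ℝ) (hH : Measurable H) (β : ℝ) (hβ : 0 < β)
    (π : Measure E)
    (hπ : π = lam.withDensity fun x => ENNReal.ofReal (Real.exp (-β * H x)))
    (F G : E → E) (hF : Measurable F) (hG : Measurable G)
    (hGF : Function.LeftInverse G F) (hFG : Function.RightInverse G F)
    (hFpres : MeasurePreserving F lam lam) (hHF : H ∘ F = H)
    (R : E → E) (hR : Measurable R) (hRR : R ∘ R = id)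
    (hRpres : MeasurePreserving R lam lam) (hHR : H ∘ R = H)
    (hRFR : R ∘ F ∘ R = G) :
    TwistedDetailedBalance π R (Kernel.deterministic F hF) ∧
      π.map (fun x => (x, F x)) = π.map (fun x => (R (F x), R x)) := by
  have hSF : SFinite π := by rw [hπ]; infer_instance
  -- T := R ∘ F preserves π
  have hRFmeas : Measurable (fun x => R (F x)) := hR.comp hF
  have hHRF : H ∘ (fun x => R (F x)) = H := by
    funext x
    have h1 := congrFun hHR (F x)
    have h2 := congrFun hHF x
    simp only [Function.comp_apply] at h1 h2 ⊢
    rw [h1, h2]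
  have hTpres : MeasurePreserving (fun x => R (F x)) lam lam :=
    hRpres.comp hFpres
  have hmapT : π.map (fun x => R (F x)) = π := by
    rw [hπ]; exact gibbs_map_eq lam H hH β _ hRFmeas hTpres hHRF
  -- key algebraic identity : F (R (F x)) = R x
  have hRR' : ∀ y, R (R y) = y := fun y => congrFun hRR y
  have hkey : ∀ x, F (R (F x)) = R x := by
    intro x
    have h1 : R (F (R (F x))) = x := by
      have h := congrFun hRFR (F x)
      simp only [Function.comp_apply] at h
      rw [h, hGF x]
    calc F (R (F x)) = R (R (F (R (F x)))) := (hRR' _).symm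
      _ = R x := by rw [h1]
  -- the composed map identity
  have hcomp : (fun x => (R (F x), R x)) = (fun y => (y, F y)) ∘ (fun x => R (F x)) := by
    funext x
    simp [Function.comp, hkey x]
  have hm : Measurable (fun x => (x, F x)) := measurable_id.prodMk hF
  have hswap : Measurable (fun xy : E × E => (R xy.2, R xy.1)) :=
    (hR.comp measurable_snd).prodMk (hR.comp measurable_fst)
  have hmap2 : π.map (fun x => (x, F x)) = π.map (fun x => (R (F x), R x)) := by
    rw [hcomp, ← Measure.map_map hm hRFmeas, hmapT]
  refine ⟨?_, hmap2⟩
  unfold TwistedDetailedBalance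
  rw [compProd_deterministic_eq_map π F hF]
  rw [Measure.map_map hswap hm]
  have : ((fun xy : E × E => (R xy.2, R xy.1)) ∘ fun x => (x, F x))
      = fun x => (R (F x), R x) := by funext x; simp [Function.comp]
  rw [this, ← hmap2]
end

section
/- Let β, m, V, Z > 0, let d ≥ 1 and N be natural numbers, let μ ∈ ℝ, let a, b ∈ ℝ, and let p ∈ ℝ^{dN}, p_new ∈ ℝ^{d}. Define the grand-canonical weights w_k(u) = (1/Z)·(1/k!)·e^{βμk − βu}, the per-particle momentum normalizer Z_p = (2πm/β)^{d/2}, the kinetic energies K₀ = ‖p‖²/(2m) and K₁ = (‖p‖² + ‖p_new‖²)/(2m), the insertion density value π_ins = (1/(V·Z_p))·exp(−β‖p_new‖²/(2m)), and δℋ = a − b + (1/β)·log(N+1) − (1/β)·log(V) − μ. Then the reversible-jump acceptance ratio equals the DHMC exponential factor: (w_{N+1}(a)·e^{−βK₁} / Z_p^{N+1}) / (w_N(b)·π_ins·e^{−βK₀} / Z_p^{N}) = e^{−β·δℋ}. -/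
open Real

/-- The reversible-jump acceptance ratio for a particle insertion equals the DHMC
exponential factor: with grand-canonical weights `w_k(u) = (1/Z)(1/k!)e^{βμk - βu}`,
per-particle momentum normalizer `Z_p = (2πm/β)^{d/2}`, kinetic energies `K₀, K₁`,
insertion density `π_ins = (1/(V Z_p)) exp(-β‖p_new‖²/(2m))`, and free-energy barrier
`δℋ = a - b + (1/β) log(N+1) - (1/β) log V - μ`, one has
`(w_{N+1}(a) e^{-βK₁} / Z_p^{N+1}) / (w_N(b) π_ins e^{-βK₀} / Z_p^N) = e^{-β δℋ}`. -/
theorem rjmcmc_ratio_eq_dhmc_factor (β m V Z : ℝ)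
    (hβ : 0 < β) (hm : 0 < m) (hV : 0 < V) (hZ : 0 < Z)
    (d N : ℕ) (hd : 1 ≤ d) (μ : ℝ)
    (p : EuclideanSpace ℝ (Fin (d * N))) (pnew : EuclideanSpace ℝ (Fin d))
    (a b : ℝ)
    (w : ℕ → ℝ → ℝ)
    (hw : ∀ (k : ℕ) (u : ℝ), w k u = (1 / Z) * (1 / (Nat.factorial k : ℝ)) *
      Real.exp (β * μ * k - β * u))
    (Zp K₀ K₁ πins δH : ℝ)
    (hZp : Zp = (2 * π * m / β) ^ ((d : ℝ) / 2))
    (hK₀ : K₀ = ‖p‖ ^ 2 / (2 * m))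
    (hK₁ : K₁ = (‖p‖ ^ 2 + ‖pnew‖ ^ 2) / (2 * m))
    (hπins : πins = (1 / (V * Zp)) * Real.exp (-β * ‖pnew‖ ^ 2 / (2 * m)))
    (hδH : δH = a - b + (1 / β) * Real.log ((N : ℝ) + 1) - (1 / β) * Real.log V - μ) :
    (w (N + 1) a * Real.exp (-β * K₁) / Zp ^ (N + 1)) /
        (w N b * πins * Real.exp (-β * K₀) / Zp ^ N) =
      Real.exp (-β * δH) := by
  have hZp_pos : 0 < Zp := by
    rw [hZp]; exact Real.rpow_pos_of_pos (by positivity) _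
  have hfacN : (0:ℝ) < (Nat.factorial N : ℝ) := by exact_mod_cast Nat.factorial_pos N
  have hN1 : (0:ℝ) < (N:ℝ) + 1 := by positivity
  have hKsplit : Real.exp (-β * K₁) =
      Real.exp (-β * K₀) * Real.exp (-β * ‖pnew‖ ^ 2 / (2 * m)) := by
    rw [← Real.exp_add, hK₀, hK₁]; ring_nf
  have hRHS : Real.exp (-β * δH) =
      Real.exp (β * μ - β * a + β * b) * V / ((N:ℝ) + 1) := by
    rw [hδH, show -β * (a - b + (1 / β) * Real.log ((N:ℝ) + 1) - (1 / β) * Real.log V - μ)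
        = (β * μ - β * a + β * b) + Real.log V + (- Real.log ((N:ℝ) + 1)) from by
      field_simp; ring]
    rw [Real.exp_add, Real.exp_add, Real.exp_log hV, Real.exp_neg, Real.exp_log hN1]
    ring
  rw [hw, hw, hπins, hRHS, hKsplit, Nat.factorial_succ]
  push_cast
  have hE1 : Real.exp (β * μ * ((N:ℝ) + 1) - β * a) =
      Real.exp (β * μ - β * a + β * b) * Real.exp (β * μ * N - β * b) := by
    rw [← Real.exp_add]; ring_nf
  rw [hE1, pow_succ]
  field_simp
  ring
end
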